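/- Let $k$ be a field of characteristic $p > 0$, $V$ a finite-dimensional $k$-vector space, and $x, y \in \mathrm{End}_k(V)$ commuting endomorphisms with $x^p = 0$ and $y^{p-1} = 0$. Then $V$ is free as a module over $k[u]/(u^p)$ with $u$ acting by $x$ if and only if $V$ is free as a module over $k[u]/(u^p)$ with $u$ acting by $x + y$. -/

import Mathlib

/-- Multiplication by `u` on the free module `(k[u]/(u^p))^d`, written in the basis
`u^0, …, u^{p-1}` of each of the `d` copies of `k[u]/(u^p)`: the coordinate shift operator. -/
noncomputable def shiftOp (k : Type*) [Field k] (p d : ℕ) :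
    Module.End k (Fin d → Fin p → k) where
  toFun v := fun i j => if h : (j : ℕ) + 1 < p then v i ⟨(j : ℕ) + 1, h⟩ else 0
  map_add' u v := by funext i j; dsimp; split <;> simp
  map_smul' c v := by funext i j; dsimp; split <;> simp

/-- `V` is free as a module over `k[u]/(u^p)` with `u` acting by the endomorphism `x`:
there is a `k`-linear isomorphism of `V` with `(k[u]/(u^p))^d` carrying `x` to
multiplication by `u`. -/
def IsFreeTruncated {k V : Type*} [Field k] [AddCommGroup V] [Module k V]
    (p : ℕ) (x : Module.End k V) : Prop :=
  ∃ (d : ℕ) (e : V ≃ₗ[k] (Fin d → Fin p → k)), ∀ v : V, e (x v) = shiftOp k p d (e v)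

open Finset

section Model
variable {k : Type*} [Field k] {p d : ℕ}

lemma shiftOp_apply (v : Fin d → Fin p → k) (i : Fin d) (j : Fin p) :
    shiftOp k p d v i j = if h : (j : ℕ) + 1 < p then v i ⟨(j : ℕ) + 1, h⟩ else 0 := rfl

lemma shiftOp_pow_apply (m : ℕ) (v : Fin d → Fin p → k) (i : Fin d) (j : Fin p) :
    ((shiftOp k p d) ^ m) v i j = if h : (j : ℕ) + m < p then v i ⟨(j : ℕ) + m, h⟩ else 0 := by
  induction m generalizing j with
  | zero => simp
  | succ m ih =>
    rw [pow_succ', Module.End.mul_apply, shiftOp_apply]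
    by_cases h1 : (j : ℕ) + 1 < p
    · rw [dif_pos h1, ih]
      by_cases h2 : (j : ℕ) + (m + 1) < p
      · rw [dif_pos (show ((⟨(j:ℕ)+1, h1⟩ : Fin p) : ℕ) + m < p by simpa using by omega),
          dif_pos h2]
        congr 1
        exact Fin.ext (by simp; omega)
      · rw [dif_neg (show ¬(((⟨(j:ℕ)+1, h1⟩ : Fin p) : ℕ) + m < p) by simpa using by omega),
          dif_neg h2]
    · rw [dif_neg h1, dif_neg (by omega)]

lemma model_ker1 (hp0 : 0 < p) (v : Fin d → Fin p → k) (hv : shiftOp k p d v = 0) :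
    ∃ w, ((shiftOp k p d) ^ (p - 1)) w = v := by
  refine ⟨fun i j => if ((j : ℕ) + 1 = p) then v i ⟨0, hp0⟩ else 0, ?_⟩
  funext i j
  rw [shiftOp_pow_apply]
  by_cases h : (j : ℕ) + (p - 1) < p
  · rw [dif_pos h]
    have hj : (j : ℕ) = 0 := by omega
    rw [if_pos (by simp; omega)]
    congr 1
    exact Fin.ext hj.symm
  · rw [dif_neg h]
    have hj : 1 ≤ (j : ℕ) := by omega
    have h2 := congrFun (congrFun hv i) ⟨(j : ℕ) - 1, by omega⟩
    rw [shiftOp_apply] at h2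
    rw [dif_pos (show ((j:ℕ) - 1) + 1 < p by omega)] at h2
    have : (⟨(j:ℕ) - 1 + 1, by omega⟩ : Fin p) = j := Fin.ext (by simp; omega)
    rw [this] at h2
    simpa using h2.symm

lemma model_ker2 (v : Fin d → Fin p → k) (hv : ((shiftOp k p d) ^ (p - 1)) v = 0) :
    ∃ w, shiftOp k p d w = v := by
  refine ⟨fun i j => if h : 1 ≤ (j : ℕ) then v i ⟨(j : ℕ) - 1, by omega⟩ else 0, ?_⟩
  funext i j
  rw [shiftOp_apply]
  by_cases h : (j : ℕ) + 1 < p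
  · rw [dif_pos h, dif_pos (show 1 ≤ (j:ℕ)+1 by omega)]
    exact congrArg (v i) (Fin.ext (by simp))
  · rw [dif_neg h]
    have h2 := congrFun (congrFun hv i) ⟨0, j.pos⟩
    rw [shiftOp_pow_apply] at h2
    rw [dif_pos (by simp; omega)] at h2
    have : (⟨(0:ℕ) + (p-1), by omega⟩ : Fin p) = j := Fin.ext (by simp; omega)
    rw [this] at h2
    simpa using h2.symm

lemma model_finrank : Module.finrank k (Fin d → Fin p → k) = d * p := by
  simp [Module.finrank_pi_fintype]

end Model

section Scalar
variable {k : Type*} [Field k] {p : ℕ} [CharP k p]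

lemma neg_one_pow_char_sub_one (hp : p.Prime) : (-1 : k) ^ (p - 1) = 1 := by
  rcases hp.eq_two_or_odd' with h2 | hodd
  · subst h2
    have h : (2 : k) = 0 := by exact_mod_cast CharP.cast_eq_zero k 2
    have : (-1 : k) = 1 := by linear_combination -h
    simp [this]
  · exact (Nat.Odd.sub_odd hodd odd_one).neg_one_pow

lemma choose_cast_eq (hp : p.Prime) : ∀ m, m ≤ p - 1 → (((p - 1).choose m : ℕ) : k) = (-1) ^ m := by
  intro m
  induction m with
  | zero => simp
  | succ m ih =>
    intro hm
    have hrec : (p - 1).choose (m + 1) * (m + 1) = (p - 1).choose m * (p - 1 - m) :=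
      Nat.choose_succ_right_eq _ _
    have hcast : (((p - 1).choose (m + 1) : ℕ) : k) * ((m + 1 : ℕ) : k)
        = (((p - 1).choose m : ℕ) : k) * (((p - 1 - m : ℕ) : ℕ) : k) := by
      exact_mod_cast congrArg (fun n : ℕ => (n : k)) hrec
    have h1 : (((p - 1 - m : ℕ) : ℕ) : k) = - ((m + 1 : ℕ) : k) := by
      have hsub : ((p - 1 - m : ℕ) : k) = ((p - 1 : ℕ) : k) - (m : k) := by
        rw [Nat.cast_sub (by omega)]
      have hsub2 : ((p - 1 : ℕ) : k) = (p : k) - 1 := by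
        rw [Nat.cast_sub (by omega)]; simp
      rw [hsub, hsub2, CharP.cast_eq_zero k p]
      push_cast
      ring
    have hne : ((m + 1 : ℕ) : k) ≠ 0 := by
      intro h0
      have := (CharP.cast_eq_zero_iff k p (m + 1)).1 h0
      have := Nat.le_of_dvd (by omega) this
      omega
    have := ih (by omega)
    rw [this, h1] at hcast
    have hfin : (((p - 1).choose (m + 1) : ℕ) : k) = (-1) ^ m * -1 := by
      have h2 : (((p - 1).choose (m + 1) : ℕ) : k) * ((m + 1 : ℕ) : k)
          = ((-1) ^ m * -1) * ((m + 1 : ℕ) : k) := by rw [hcast]; ring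
      exact mul_right_cancel₀ hne h2
    rw [hfin, pow_succ]

lemma neg_one_pow_flip (hp : p.Prime) {i : ℕ} (hi : i < p - 1) :
    (-1 : k) ^ (p - 2 - i) = (-1 : k) ^ (i + 1) := by
  rcases hp.eq_two_or_odd' with h2 | hodd
  · subst h2
    have h : (2 : k) = 0 := by exact_mod_cast CharP.cast_eq_zero k 2
    have hneg : (-1 : k) = 1 := by linear_combination -h
    simp [hneg]
  · have hsum : (p - 2 - i) + (i + 1) = p - 1 := by omega
    have heven : Even (p - 1) := Nat.Odd.sub_odd hodd odd_one
    rw [← hsum] at heven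
    rcases Nat.even_or_odd (i + 1) with he | ho
    · have : Even (p - 2 - i) := by
        rcases Nat.even_add.1 heven with h
        exact h.2 he
      rw [this.neg_one_pow, he.neg_one_pow]
    · have : Odd (p - 2 - i) := by
        by_contra hod
        have := (Nat.even_add.1 heven).1 (Nat.not_odd_iff_even.1 hod)
        exact (Nat.not_odd_iff_even.2 this) ho
      rw [this.neg_one_pow, ho.neg_one_pow]

end Scalar

section Ops
variable {k V : Type*} [Field k] [AddCommGroup V] [Module k V] {p : ℕ} [CharP k p]

lemma add_pow_p_eq_zero (hp : p.Prime) {x y : Module.End k V} (hxy : Commute x y)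
    (hx : x ^ p = 0) (hy : y ^ (p - 1) = 0) : (x + y) ^ p = 0 := by
  have hppos : 0 < p := hp.pos
  have hyp : y ^ p = 0 := by
    rw [show p = (p - 1) + 1 by omega, pow_succ, hy, zero_mul]
  have hcast : ((p : ℕ) : Module.End k V) = 0 := by
    rw [← map_natCast (algebraMap k (Module.End k V)) p, CharP.cast_eq_zero k p, map_zero]
  rw [hxy.add_pow_prime_eq hp, hx, hyp, hcast]
  simp

lemma ker_chase (hp : p.Prime) (x y : Module.End k V)
    (hxy : Commute x y) (hx : x ^ p = 0) (hy : y ^ (p - 1) = 0)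
    (hA : ∀ v : V, x v = 0 → ∃ w, (x ^ (p - 1)) w = v)
    (hB : ∀ v : V, (x ^ (p - 1)) v = 0 → ∃ w, x w = v) :
    ∀ v : V, ((x + y) ^ (p - 1)) v = 0 → ∃ w, (x + y) w = v := by
  set z := x + y with hzdef
  set Q : Module.End k V := ∑ i ∈ Finset.range (p - 1), x ^ i * (-y) ^ (p - 1 - 1 - i) with hQdef
  have hxny : Commute x (-y) := hxy.neg_right
  have hQz : Q * z = x ^ (p - 1) := by
    have h := hxny.geom_sum₂_mul (p - 1)
    rw [sub_neg_eq_add] at h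
    have hnegy : (-y) ^ (p - 1) = 0 := by rw [neg_pow, hy, mul_zero]
    rw [hnegy, sub_zero] at h
    exact h
  have hcomxQ : Commute x Q :=
    Commute.sum_right _ _ _ (fun i _ =>
      ((Commute.refl x).pow_right i).mul_right (hxny.pow_right _))
  have hcomyQ : Commute y Q :=
    Commute.sum_right _ _ _ (fun i _ =>
      (hxy.symm.pow_right i).mul_right (((Commute.refl y).neg_right).pow_right _))
  have hcomzQ : Commute z Q := hcomxQ.add_left hcomyQ
  have hzQ : z * Q = x ^ (p - 1) := by rw [hcomzQ.eq, hQz]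
  have hxQ : x * Q = z ^ (p - 1) := by
    have hlhs : x * Q = ∑ i ∈ Finset.range (p - 1), x ^ (i + 1) * (-y) ^ (p - 1 - 1 - i) := by
      rw [hQdef, Finset.mul_sum]
      refine Finset.sum_congr rfl fun i _ => ?_
      rw [← mul_assoc, ← pow_succ']
    have hrhs : z ^ (p - 1)
        = ∑ i ∈ Finset.range (p - 1), x ^ (i + 1) * y ^ (p - 1 - (i + 1))
            * ((p - 1).choose (i + 1) : Module.End k V) := by
      rw [hzdef, hxy.add_pow (p - 1), Finset.sum_range_succ']
      have h0 : x ^ 0 * y ^ (p - 1 - 0) * ((p - 1).choose 0 : Module.End k V) = 0 := by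
        simp [hy]
      rw [h0, add_zero]
    rw [hlhs, hrhs]
    refine Finset.sum_congr rfl fun i hi => ?_
    have hilt : i < p - 1 := Finset.mem_range.1 hi
    have hcast : (((p - 1).choose (i + 1) : ℕ) : Module.End k V)
        = algebraMap k (Module.End k V) ((-1 : k) ^ (i + 1)) := by
      rw [← map_natCast (algebraMap k (Module.End k V)) ((p - 1).choose (i + 1)),
        choose_cast_eq hp (i + 1) (by omega)]
    have hnegpow : (-y) ^ (p - 1 - 1 - i)
        = algebraMap k (Module.End k V) ((-1 : k) ^ (i + 1)) * y ^ (p - 1 - 1 - i) := by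
      rw [neg_pow]
      congr 1
      rw [show p - 1 - 1 - i = p - 2 - i by omega, ← neg_one_pow_flip hp hilt]
      rw [map_pow, map_neg, map_one]
    rw [hnegpow, hcast, show p - 1 - (i + 1) = p - 1 - 1 - i by omega]
    rw [← mul_assoc, mul_assoc, mul_assoc, Algebra.commutes]
  -- the kernel chase
  have hQstep : ∀ v : V, Q v = 0 → ∃ a b, Q b = 0 ∧ v = x ((x + y) a) + x b := by
    intro v hv
    have h1 : (x ^ (p - 1)) v = 0 := by
      rw [← hzQ, Module.End.mul_apply, hv, map_zero]
    obtain ⟨w, hw⟩ := hB v h1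
    have h2 : x (Q w) = 0 := by
      have hcm : Q (x w) = x (Q w) := by
        rw [← Module.End.mul_apply, ← Module.End.mul_apply, ← hcomxQ.eq]
      rw [← hcm, hw, hv]
    obtain ⟨s, hs⟩ := hA _ h2
    have h3 : Q (w - z s) = 0 := by
      rw [map_sub]
      have hQzs : Q (z s) = (x ^ (p - 1)) s := by rw [← Module.End.mul_apply, hQz]
      rw [hQzs, hs, sub_self]
    refine ⟨s, w - z s, h3, ?_⟩
    have hws : x w = x (z s) + x (w - z s) := by
      rw [← map_add]
      congr 1
      abel
    rw [← hw, hws]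
  have hQiter : ∀ (j : ℕ) (v : V), Q v = 0 → ∃ a b, Q b = 0 ∧ v = (x + y) a + (x ^ j) b := by
    intro j
    induction j with
    | zero => intro v hv; exact ⟨0, v, hv, by simp⟩
    | succ j ih =>
      intro v hv
      obtain ⟨a, b, hb, hvab⟩ := ih v hv
      obtain ⟨a', b', hb', hb2⟩ := hQstep b hb
      refine ⟨a + (x ^ (j + 1)) a', b', hb', ?_⟩
      have hxz : Commute z (x ^ (j + 1)) :=
        (((Commute.refl x).add_right hxy).symm).pow_right _
      have hc1 : z ((x ^ (j + 1)) a') = (x ^ (j + 1)) (z a') := by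
        rw [← Module.End.mul_apply, ← Module.End.mul_apply, hxz.eq]
      have hc2 : ∀ c : V, (x ^ j) (x c) = (x ^ (j + 1)) c := by
        intro c; rw [← Module.End.mul_apply, ← pow_succ]
      calc v = z a + (x ^ j) b := hvab
        _ = z a + (x ^ j) (x (z a') + x b') := by rw [← hb2]
        _ = z a + ((x ^ (j + 1)) (z a') + (x ^ (j + 1)) b') := by
            rw [map_add, hc2, hc2]
        _ = z (a + (x ^ (j + 1)) a') + (x ^ (j + 1)) b' := by
            rw [map_add, hc1]; abel
  have hkerQ : ∀ v, Q v = 0 → ∃ w, z w = v := by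
    intro v hv
    obtain ⟨a, b, hb, hab⟩ := hQiter p v hv
    refine ⟨a, ?_⟩
    rw [hab, hx]
    simp [hzdef, LinearMap.add_apply]
  intro v hv
  have h1 : x (Q v) = 0 := by
    rw [← Module.End.mul_apply, hxQ]
    exact hv
  obtain ⟨s, hs⟩ := hA _ h1
  have h2 : Q (v - z s) = 0 := by
    rw [map_sub]
    have hQzs : Q (z s) = (x ^ (p - 1)) s := by rw [← Module.End.mul_apply, hQz]
    rw [hQzs, hs, sub_self]
  obtain ⟨a, ha⟩ := hkerQ _ h2
  exact ⟨s + a, by rw [map_add, ha]; abel⟩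

end Ops

section Rank
variable {k V : Type*} [Field k] [AddCommGroup V] [Module k V]

lemma finrank_ker_pow_le [FiniteDimensional k V] (f : Module.End k V) (m : ℕ) :
    Module.finrank k (LinearMap.ker (f ^ m)) ≤ m * Module.finrank k (LinearMap.ker f) := by
  induction m with
  | zero => simp [Module.End.one_eq_id]
  | succ m ih =>
    have hmap : ∀ v ∈ LinearMap.ker (f ^ (m + 1)), (f ^ m) v ∈ LinearMap.ker f := by
      intro v hv
      rw [LinearMap.mem_ker] at hv ⊢
      rw [← Module.End.mul_apply, ← pow_succ', hv]
    set g : LinearMap.ker (f ^ (m + 1)) →ₗ[k] LinearMap.ker f := (f ^ m).restrict hmap with hg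
    have h1 : Module.finrank k (LinearMap.range g) + Module.finrank k (LinearMap.ker g)
        = Module.finrank k (LinearMap.ker (f ^ (m + 1))) :=
      LinearMap.finrank_range_add_finrank_ker g
    have h2 : Module.finrank k (LinearMap.range g) ≤ Module.finrank k (LinearMap.ker f) :=
      Submodule.finrank_le _
    let φ : LinearMap.ker g →ₗ[k] LinearMap.ker (f ^ m) :=
      LinearMap.codRestrict _ ((LinearMap.ker (f ^ (m + 1))).subtype.comp
        (LinearMap.ker g).subtype)
        (by
          rintro ⟨⟨v, hv1⟩, hv2⟩
          have hv2' : g ⟨v, hv1⟩ = 0 := hv2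
          have h3 := congrArg Subtype.val hv2'
          rw [LinearMap.restrict_apply] at h3
          simpa [LinearMap.mem_ker] using h3)
    have hinj : Function.Injective φ := by
      intro a b hab
      have h4 := congrArg Subtype.val hab
      exact Subtype.ext (Subtype.ext h4)
    have h3 : Module.finrank k (LinearMap.ker g) ≤ Module.finrank k (LinearMap.ker (f ^ m)) :=
      LinearMap.finrank_le_finrank_of_injective hinj
    calc Module.finrank k (LinearMap.ker (f ^ (m + 1)))
        = Module.finrank k (LinearMap.range g) + Module.finrank k (LinearMap.ker g) := h1.symm
      _ ≤ Module.finrank k (LinearMap.ker f) + m * Module.finrank k (LinearMap.ker f) :=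
          Nat.add_le_add h2 (le_trans h3 ih)
      _ = (m + 1) * Module.finrank k (LinearMap.ker f) := by ring

lemma free_of_rank {p : ℕ} (hp : p.Prime) {d : ℕ} (z : Module.End k V) [FiniteDimensional k V]
    (hzp : z ^ p = 0) (hdim : Module.finrank k V = d * p)
    (hker : ∀ v : V, (z ^ (p - 1)) v = 0 → ∃ w, z w = v) :
    IsFreeTruncated p z := by
  classical
  have hk1 : Module.finrank k V ≤ p * Module.finrank k (LinearMap.ker z) := by
    have h1 := finrank_ker_pow_le z p
    have h2 : LinearMap.ker (z ^ p) = ⊤ := by rw [hzp]; exact LinearMap.ker_zero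
    rw [h2, finrank_top] at h1
    exact h1
  have hd_le : d ≤ Module.finrank k (LinearMap.ker z) := by
    refine Nat.le_of_mul_le_mul_left ?_ hp.pos
    calc p * d = d * p := by ring
      _ = Module.finrank k V := hdim.symm
      _ ≤ p * Module.finrank k (LinearMap.ker z) := hk1
  have hsub : LinearMap.ker (z ^ (p - 1)) ≤ LinearMap.range z := by
    intro v hv
    rw [LinearMap.mem_ker] at hv
    obtain ⟨w, hw⟩ := hker v hv
    exact ⟨w, hw⟩
  have hk2 : Module.finrank k (LinearMap.ker (z ^ (p - 1)))
      ≤ Module.finrank k (LinearMap.range z) := Submodule.finrank_mono hsub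
  have e1 := LinearMap.finrank_range_add_finrank_ker (z ^ (p - 1))
  have e2 := LinearMap.finrank_range_add_finrank_ker z
  have hrank_ge : d ≤ Module.finrank k (LinearMap.range (z ^ (p - 1))) := by
    have h6 : Module.finrank k (LinearMap.ker (z ^ (p - 1)))
        + Module.finrank k (LinearMap.ker z) ≤ Module.finrank k V := by
      calc Module.finrank k (LinearMap.ker (z ^ (p - 1)))
          + Module.finrank k (LinearMap.ker z)
          ≤ Module.finrank k (LinearMap.range z) + Module.finrank k (LinearMap.ker z) :=
            Nat.add_le_add_right hk2 _
        _ = Module.finrank k V := e2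
    omega
  -- choose the generators
  let bR := Module.finBasis k (LinearMap.range (z ^ (p - 1)))
  have hv0 : ∀ i : Fin d, ∃ w : V,
      (z ^ (p - 1)) w = (bR (Fin.castLE hrank_ge i) : V) := by
    intro i
    obtain ⟨w, hw⟩ := (bR (Fin.castLE hrank_ge i)).2
    exact ⟨w, hw⟩
  choose v hv using hv0
  have hind0 : LinearIndependent k (fun i : Fin d => (z ^ (p - 1)) (v i)) := by
    have h1 : LinearIndependent k (fun i : Fin (Module.finrank k
        (LinearMap.range (z ^ (p - 1)))) => (bR i : V)) :=
      bR.linearIndependent.map' (LinearMap.range (z ^ (p - 1))).subtype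
        (Submodule.ker_subtype _)
    have h2 := h1.comp (Fin.castLE hrank_ge) (Fin.castLE_injective hrank_ge)
    have h3 : (fun i : Fin d => (z ^ (p - 1)) (v i))
        = fun i => (bR (Fin.castLE hrank_ge i) : V) := funext hv
    rw [h3]
    exact h2
  set b : Fin d × Fin p → V := fun ij => (z ^ (p - 1 - (ij.2 : ℕ))) (v ij.1) with hbdef
  have hzN : ∀ N, p ≤ N → (z : Module.End k V) ^ N = 0 := by
    intro N hN
    rw [show N = (N - p) + p by omega, pow_add, hzp, mul_zero]
  have hind : LinearIndependent k b := by
    rw [Fintype.linearIndependent_iff]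
    have H : ∀ m : ℕ, m ≤ p → ∀ g : Fin d × Fin p → k,
        (∑ ij : Fin d × Fin p, g ij • b ij = 0) →
        (∀ (i : Fin d) (j : Fin p), m ≤ (j : ℕ) → g (i, j) = 0) →
        ∀ ij, g ij = 0 := by
      intro m
      induction m with
      | zero => intro _ g _ hsupp ij; exact hsupp ij.1 ij.2 (Nat.zero_le _)
      | succ m ihm =>
        intro hmp g hsum hsupp
        have hm : m < p := by omega
        have hnew : ∀ i : Fin d, g (i, ⟨m, hm⟩) = 0 := by
          have happ : ∑ ij : Fin d × Fin p, g ij • (z ^ m) (b ij) = 0 := by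
            have h5 := congrArg (fun w : V => (z ^ m) w) hsum
            simpa [map_sum, map_smul] using h5
          have hred : ∑ i : Fin d, g (i, ⟨m, hm⟩) • (z ^ (p - 1)) (v i) = 0 := by
            rw [← happ, Fintype.sum_prod_type]
            refine Finset.sum_congr rfl fun i _ => ?_
            rw [Finset.sum_eq_single (⟨m, hm⟩ : Fin p)]
            · have hb1 : (z ^ m) (b (i, ⟨m, hm⟩)) = (z ^ (p - 1)) (v i) := by
                show (z ^ m) ((z ^ (p - 1 - m)) (v i)) = _
                rw [← Module.End.mul_apply, ← pow_add,
                  show m + (p - 1 - m) = p - 1 by omega]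
              rw [hb1]
            · intro j _ hj
              rcases Nat.lt_or_ge (j : ℕ) m with hlt | hge
              · have hb2 : (z ^ m) (b (i, j)) = 0 := by
                  rw [hbdef]
                  dsimp only
                  rw [← Module.End.mul_apply, ← pow_add, hzN _ (by omega), LinearMap.zero_apply]
                rw [hb2, smul_zero]
              · have hj' : m + 1 ≤ (j : ℕ) := by
                  rcases Nat.eq_or_lt_of_le hge with he | hlt
                  · exact absurd (Fin.ext he.symm) hj
                  · omega
                rw [hsupp i j hj', zero_smul]
            · intro hnot
              exact absurd (Finset.mem_univ _) hnot
          have := Fintype.linearIndependent_iff.1 hind0 _ hred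
          intro i
          exact this i
        refine ihm (by omega) g hsum ?_
        intro i j hj
        rcases Nat.eq_or_lt_of_le hj with he | hlt
        · have : j = (⟨m, hm⟩ : Fin p) := Fin.ext he.symm
          rw [this]
          exact hnew i
        · exact hsupp i j hlt
    intro g hg
    exact H p le_rfl g hg (fun i j hj => absurd j.2 (by omega))
  -- build the basis
  rcases Nat.eq_zero_or_pos d with hd0 | hd0
  · subst hd0
    have h0 : Module.finrank k V = 0 := by rw [hdim, Nat.zero_mul]
    have heq : Module.finrank k V = Module.finrank k (Fin 0 → Fin p → k) := by
      rw [h0, model_finrank, Nat.zero_mul]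
    refine ⟨0, LinearEquiv.ofFinrankEq _ _ heq, ?_⟩
    intro w
    funext i
    exact absurd i.2 (by omega)
  · haveI : Nonempty (Fin d × Fin p) := ⟨(⟨0, hd0⟩, ⟨0, hp.pos⟩)⟩
    have hcard : Fintype.card (Fin d × Fin p) = Module.finrank k V := by
      simp [hdim]
    let B := basisOfLinearIndependentOfCardEqFinrank hind hcard
    have hB : ⇑B = b := coe_basisOfLinearIndependentOfCardEqFinrank _ _
    refine ⟨d, B.equivFun.trans (LinearEquiv.curry k k (Fin d) (Fin p)), ?_⟩
    have hzB : ∀ (i : Fin d) (j : Fin p), z (B (i, j))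
        = if h : 1 ≤ (j : ℕ) then B (i, ⟨(j : ℕ) - 1,
            Nat.lt_of_le_of_lt (Nat.sub_le _ _) j.isLt⟩) else 0 := by
      intro i j
      rw [hB]
      show z (b (i, j)) = _
      rw [hbdef]
      dsimp only
      rw [← Module.End.mul_apply, ← pow_succ']
      by_cases hj : 1 ≤ (j : ℕ)
      · rw [dif_pos hj]
        rw [show (p - 1 - (j : ℕ)) + 1 = p - 1 - ((j : ℕ) - 1) by have := j.isLt; omega]
      · rw [dif_neg hj]
        have : (j : ℕ) = 0 := by omega
        rw [this, Nat.sub_zero, show (p - 1) + 1 = p by omega, hzp, LinearMap.zero_apply]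
    -- final verification on basis vectors
    set e := B.equivFun.trans (LinearEquiv.curry k k (Fin d) (Fin p)) with hedef
    have hmain : (e : V →ₗ[k] (Fin d → Fin p → k)).comp (z : V →ₗ[k] V)
        = (shiftOp k p d : (Fin d → Fin p → k) →ₗ[k] _).comp (e : V →ₗ[k] _) := by
      refine B.ext ?_
      rintro ⟨i, j⟩
      simp only [LinearMap.comp_apply, LinearEquiv.coe_coe]
      have hcomp : ∀ (w : V) (i' : Fin d) (j' : Fin p), e w i' j' = B.equivFun w (i', j') := by
        intro w i' j'
        rfl
      funext i' j'
      rw [hcomp]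
      rw [hzB i j]
      rw [shiftOp_apply]
      have hjlt := j.isLt
      have hjlt' := j'.isLt
      by_cases hj : 1 ≤ (j : ℕ)
      · rw [dif_pos hj, Module.Basis.equivFun_self]
        by_cases hlt : (j' : ℕ) + 1 < p
        · rw [dif_pos hlt, hcomp, Module.Basis.equivFun_self]
          simp only [Prod.mk.injEq, Fin.ext_iff, Fin.val_mk]
          split_ifs with h1 h2 h2
          · rfl
          · exfalso; omega
          · exfalso; omega
          · rfl
        · rw [dif_neg hlt]
          simp only [Prod.mk.injEq, Fin.ext_iff, Fin.val_mk]
          split_ifs with h1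
          · exfalso; omega
          · rfl
      · rw [dif_neg hj]
        simp only [map_zero, Pi.zero_apply]
        by_cases hlt : (j' : ℕ) + 1 < p
        · rw [dif_pos hlt, hcomp, Module.Basis.equivFun_self]
          simp only [Prod.mk.injEq, Fin.ext_iff, Fin.val_mk]
          split_ifs with h1
          · exfalso; omega
          · rfl
        · rw [dif_neg hlt]
    intro w
    exact LinearMap.congr_fun hmain w

end Rank

section Main
variable {k V : Type*} [Field k] [AddCommGroup V] [Module k V] {p : ℕ} [CharP k p]

lemma isFreeTruncated_add_of (hp : p.Prime) [FiniteDimensional k V] (x y : Module.End k V)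
    (hxy : Commute x y) (hx : x ^ p = 0) (hy : y ^ (p - 1) = 0)
    (hfree : IsFreeTruncated p x) : IsFreeTruncated p (x + y) := by
  obtain ⟨d, e, he⟩ := hfree
  have hpow : ∀ (m : ℕ) (v : V), e ((x ^ m) v) = ((shiftOp k p d) ^ m) (e v) := by
    intro m
    induction m with
    | zero => intro v; simp
    | succ m ih =>
      intro v
      rw [pow_succ, Module.End.mul_apply, ih, he, ← Module.End.mul_apply, ← pow_succ]
  have hdim : Module.finrank k V = d * p := by
    rw [e.finrank_eq, model_finrank]
  have hA : ∀ v : V, x v = 0 → ∃ w, (x ^ (p - 1)) w = v := by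
    intro v hv
    have h1 : shiftOp k p d (e v) = 0 := by rw [← he, hv, map_zero]
    obtain ⟨w', hw'⟩ := model_ker1 hp.pos _ h1
    refine ⟨e.symm w', e.injective ?_⟩
    rw [hpow, e.apply_symm_apply, hw']
  have hB : ∀ v : V, (x ^ (p - 1)) v = 0 → ∃ w, x w = v := by
    intro v hv
    have h1 : ((shiftOp k p d) ^ (p - 1)) (e v) = 0 := by rw [← hpow, hv, map_zero]
    obtain ⟨w', hw'⟩ := model_ker2 _ h1
    refine ⟨e.symm w', e.injective ?_⟩
    rw [he, e.apply_symm_apply, hw']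
  have hker := ker_chase hp x y hxy hx hy hA hB
  have hzp : (x + y) ^ p = 0 := add_pow_p_eq_zero hp hxy hx hy
  exact free_of_rank hp (x + y) hzp hdim hker

end Main

theorem isFreeTruncated_add_iff {k V : Type*} [Field k] {p : ℕ} [CharP k p] (hp : p.Prime)
    [AddCommGroup V] [Module k V] [FiniteDimensional k V]
    (x y : Module.End k V) (hxy : Commute x y) (hx : x ^ p = 0) (hy : y ^ (p - 1) = 0) :
    IsFreeTruncated p x ↔ IsFreeTruncated p (x + y) := by
  constructor
  · intro h
    exact isFreeTruncated_add_of hp x y hxy hx hy h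
  · intro h
    have h2 := isFreeTruncated_add_of hp (x + y) (-y)
      ((Commute.add_left hxy (Commute.refl y)).neg_right)
      (add_pow_p_eq_zero hp hxy hx hy) (by rw [neg_pow, hy, mul_zero]) h
    rw [add_neg_cancel_right] at h2
    exact h2
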